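/- arXiv:1312.6446 — 2 statements merged into one kernel-verified Lean document; each statement's English description precedes it below -/
import Mathlib

section
/- Let H, H₂ be Hilbert spaces, and let (V_t)_{t∈[0,1]} be a continuous family of closed subspaces of H (given by continuous projections P_t). Let D_t : V_t → H₂ be a family of uniformly bounded linear maps with closed range, depending continuously on t, such that D_t is an isomorphism for all t ∈ (0,1]. If D_0 is surjective, then D_0 is injective. -/
open Set Filter Topology

lemma approx_surj_aux {H H₂ : Type*} [NormedAddCommGroup H] [NormedSpace ℝ H] [CompleteSpace H]
    [NormedAddCommGroup H₂] [NormedSpace ℝ H₂]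
    (T : H →L[ℝ] H₂) (p : H →L[ℝ] H) (C : ℝ) (hC : 0 ≤ C)
    (h : ∀ y : H₂, ∃ w : H, p w = w ∧ ‖w‖ ≤ C * ‖y‖ ∧ ‖y - T w‖ ≤ 2⁻¹ * ‖y‖) :
    ∀ y : H₂, ∃ z : H, p z = z ∧ ‖z‖ ≤ 2 * C * ‖y‖ ∧ T z = y := by
  intro y₀
  -- recursive sequence
  let Y : ℕ → H₂ := fun n => Nat.rec y₀ (fun _ yn => yn - T (h yn).choose) n
  have hYsucc : ∀ n, Y (n + 1) = Y n - T (h (Y n)).choose := fun n => rfl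
  set w : ℕ → H := fun n => (h (Y n)).choose with hw
  have hwp : ∀ n, p (w n) = w n := fun n => (h (Y n)).choose_spec.1
  have hwn : ∀ n, ‖w n‖ ≤ C * ‖Y n‖ := fun n => (h (Y n)).choose_spec.2.1
  have hYle : ∀ n, ‖Y (n + 1)‖ ≤ 2⁻¹ * ‖Y n‖ := fun n => (h (Y n)).choose_spec.2.2
  have hYbound : ∀ n, ‖Y n‖ ≤ (2⁻¹ : ℝ) ^ n * ‖y₀‖ := by
    intro n
    induction n with
    | zero => simp [Y]
    | succ n ih =>
      calc ‖Y (n + 1)‖ ≤ 2⁻¹ * ‖Y n‖ := hYle n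
        _ ≤ 2⁻¹ * ((2⁻¹ : ℝ) ^ n * ‖y₀‖) := by
            apply mul_le_mul_of_nonneg_left ih (by norm_num)
        _ = (2⁻¹ : ℝ) ^ (n + 1) * ‖y₀‖ := by ring
  have hwbound : ∀ n, ‖w n‖ ≤ C * ‖y₀‖ * (2⁻¹ : ℝ) ^ n := by
    intro n
    calc ‖w n‖ ≤ C * ‖Y n‖ := hwn n
      _ ≤ C * ((2⁻¹ : ℝ) ^ n * ‖y₀‖) :=
          mul_le_mul_of_nonneg_left (hYbound n) hC
      _ = C * ‖y₀‖ * (2⁻¹ : ℝ) ^ n := by ring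
  have hgeo : Summable (fun n : ℕ => C * ‖y₀‖ * (2⁻¹ : ℝ) ^ n) :=
    (summable_geometric_of_lt_one (by norm_num) (by norm_num)).mul_left _
  have hsumnorm : Summable (fun n => ‖w n‖) :=
    Summable.of_nonneg_of_le (fun n => norm_nonneg _) hwbound hgeo
  have hsum : Summable w := hsumnorm.of_norm
  refine ⟨∑' n, w n, ?_, ?_, ?_⟩
  · rw [p.map_tsum hsum]
    exact tsum_congr hwp
  · calc ‖∑' n, w n‖ ≤ ∑' n, ‖w n‖ := norm_tsum_le_tsum_norm hsumnorm
      _ ≤ ∑' n, C * ‖y₀‖ * (2⁻¹ : ℝ) ^ n := Summable.tsum_le_tsum hwbound hsumnorm hgeo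
      _ = C * ‖y₀‖ * ∑' n, (2⁻¹ : ℝ) ^ n := by rw [tsum_mul_left]
      _ = 2 * C * ‖y₀‖ := by
          rw [tsum_geometric_of_lt_one (by norm_num) (by norm_num)]
          norm_num; ring
  · rw [T.map_tsum hsum]
    have hTw : ∀ n, T (w n) = Y n - Y (n + 1) := by
      intro n; rw [hYsucc n]; abel
    have hsum2 : Summable (fun n => T (w n)) := hsum.map T T.continuous
    have h1 : Tendsto (fun n => ∑ i ∈ Finset.range n, T (w i)) atTop (𝓝 (∑' n, T (w n))) :=
      hsum2.hasSum.tendsto_sum_nat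
    have h2 : Tendsto (fun n => ∑ i ∈ Finset.range n, T (w i)) atTop (𝓝 y₀) := by
      have : (fun n => ∑ i ∈ Finset.range n, T (w i)) = fun n => Y 0 - Y n := by
        funext n
        simp only [hTw]
        exact Finset.sum_range_sub' Y n
      rw [this]
      have hY0 : Tendsto Y atTop (𝓝 0) := by
        apply squeeze_zero_norm hYbound
        have := tendsto_pow_atTop_nhds_zero_of_lt_one (by norm_num : (0:ℝ) ≤ 2⁻¹) (by norm_num)
        simpa using this.mul_const ‖y₀‖
      have hY00 : Y 0 = y₀ := rfl
      simpa [hY00] using (tendsto_const_nhds (x := Y 0)).sub hY0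
    exact tendsto_nhds_unique h1 h2


/-- A continuous family of closed subspaces `V t = range (P t)` of a Hilbert
space `H` (given by continuous projections `P t`), and a family `D t` of uniformly bounded
operators with closed range on `V t`, continuous in `t`, which are isomorphisms from `V t`
onto `H₂` for `t ∈ (0,1]`.  If `D 0` is surjective on `V 0`, then `D 0` is injective on `V 0`. -/
theorem stmt0
    {H H₂ : Type*} [NormedAddCommGroup H] [InnerProductSpace ℝ H] [CompleteSpace H]
    [NormedAddCommGroup H₂] [InnerProductSpace ℝ H₂] [CompleteSpace H₂]
    (P : ℝ → H →L[ℝ] H) (D : ℝ → H →L[ℝ] H₂)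
    (hproj : ∀ t ∈ Icc (0:ℝ) 1, (P t).comp (P t) = P t)
    (hPcont : ContinuousOn P (Icc (0:ℝ) 1))
    (hDcont : ContinuousOn (fun t => (D t).comp (P t)) (Icc (0:ℝ) 1))
    (hbound : ∃ M : ℝ, ∀ t ∈ Icc (0:ℝ) 1, ‖D t‖ ≤ M)
    (hclosed : ∀ t ∈ Icc (0:ℝ) 1, IsClosed ((D t) '' (LinearMap.range (P t : H →ₗ[ℝ] H) : Set H)))
    (hiso : ∀ t ∈ Ioc (0:ℝ) 1,
      (∀ x ∈ LinearMap.range (P t : H →ₗ[ℝ] H), D t x = 0 → x = 0) ∧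
      (∀ y : H₂, ∃ x ∈ LinearMap.range (P t : H →ₗ[ℝ] H), D t x = y))
    (hsurj0 : ∀ y : H₂, ∃ x ∈ LinearMap.range (P 0 : H →ₗ[ℝ] H), D 0 x = y) :
    ∀ x ∈ LinearMap.range (P 0 : H →ₗ[ℝ] H), D 0 x = 0 → x = 0 := by
  intro x hx hDx
  by_contra hxne
  have hxpos : 0 < ‖x‖ := norm_pos_iff.mpr hxne
  have h0mem : (0:ℝ) ∈ Icc (0:ℝ) 1 := by norm_num
  have hP0 : (P 0).comp (P 0) = P 0 := hproj 0 h0mem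
  have hfix0 : ∀ v ∈ LinearMap.range (P 0 : H →ₗ[ℝ] H), P 0 v = v := by
    intro v hv
    obtain ⟨a, ha⟩ := hv
    rw [← ha, ContinuousLinearMap.coe_coe, ← ContinuousLinearMap.comp_apply, hP0]
  have hP0x : P 0 x = x := hfix0 x hx
  obtain ⟨Q, hQdef⟩ : ∃ Q : ℝ → H →L[ℝ] H₂, Q = fun t => (D t).comp (P t) := ⟨_, rfl⟩
  have hQapp : ∀ s v, Q s v = D s (P s v) := by intro s v; rw [hQdef]; rfl
  have hQcont : ContinuousOn Q (Icc (0:ℝ) 1) := by rw [hQdef]; exact hDcont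
  -- surjectivity of Q 0
  have hQsurj : Function.Surjective (Q 0) := by
    intro y
    obtain ⟨v, hv, hDv⟩ := hsurj0 y
    exact ⟨v, by rw [hQapp, hfix0 v hv]; exact hDv⟩
  obtain ⟨C, hCpos, hC⟩ := ContinuousLinearMap.exists_preimage_norm_le (Q 0) hQsurj
  -- constants
  set C' : ℝ := (‖P 0‖ + 1) * C with hC'def
  have hC'pos : 0 < C' := by positivity
  set C₂ : ℝ := (‖P 0‖ + 1) * C' with hC₂def
  have hC₂pos : 0 < C₂ := by positivity
  obtain ⟨ε, hεpos, hεa, hεb⟩ :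
      ∃ ε : ℝ, 0 < ε ∧ ε * (2 * C') ≤ 1 ∧ ε * (8 * C₂ + 1) ≤ 1 := by
    refine ⟨min (1 / (2 * C')) (1 / (8 * C₂ + 1)), lt_min (by positivity) (by positivity), ?_, ?_⟩
    · have h2C' : (0:ℝ) < 2 * C' := by positivity
      have := min_le_left (1 / (2 * C')) (1 / (8 * C₂ + 1))
      rw [← le_div_iff₀ h2C']
      exact this
    · have h8 : (0:ℝ) < 8 * C₂ + 1 := by positivity
      have := min_le_right (1 / (2 * C')) (1 / (8 * C₂ + 1))
      rw [← le_div_iff₀ h8]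
      exact this
  -- choose t
  have hQt : Tendsto Q (𝓝[Ioc (0:ℝ) 1] 0) (𝓝 (Q 0)) :=
    (hQcont 0 h0mem).mono_left (nhdsWithin_mono 0 Ioc_subset_Icc_self)
  have hPt : Tendsto P (𝓝[Ioc (0:ℝ) 1] 0) (𝓝 (P 0)) :=
    (hPcont 0 h0mem).mono_left (nhdsWithin_mono 0 Ioc_subset_Icc_self)
  have hE1 : ∀ᶠ t in 𝓝[Ioc (0:ℝ) 1] 0, ‖Q t - Q 0‖ < ε := by
    have := Metric.tendsto_nhds.mp hQt ε hεpos
    filter_upwards [this] with t ht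
    rwa [dist_eq_norm] at ht
  have hE2 : ∀ᶠ t in 𝓝[Ioc (0:ℝ) 1] 0, ‖P t - P 0‖ < 2⁻¹ := by
    have := Metric.tendsto_nhds.mp hPt 2⁻¹ (by norm_num)
    filter_upwards [this] with t ht
    rwa [dist_eq_norm] at ht
  have : NeBot (𝓝[Ioc (0:ℝ) 1] 0) := left_nhdsWithin_Ioc_neBot (by norm_num)
  obtain ⟨t, ht, h1, h2⟩ :=
    (eventually_mem_nhdsWithin.and (hE1.and hE2)).exists
  have ht01 : t ∈ Icc (0:ℝ) 1 := Ioc_subset_Icc_self ht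
  have hPtproj : (P t).comp (P t) = P t := hproj t ht01
  have hfixt : ∀ v, P t (P t v) = P t v := by
    intro v
    rw [← ContinuousLinearMap.comp_apply, hPtproj]
  have hPtnorm : ‖P t‖ ≤ ‖P 0‖ + 1 := by
    calc ‖P t‖ = ‖P 0 + (P t - P 0)‖ := by congr 1; abel
      _ ≤ ‖P 0‖ + ‖P t - P 0‖ := norm_add_le _ _
      _ ≤ ‖P 0‖ + 1 := by linarith [h2.le]
  -- approximate right inverse property
  have happrox : ∀ y : H₂, ∃ w : H, P t w = w ∧ ‖w‖ ≤ C₂ * ‖y‖ ∧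
      ‖y - D t w‖ ≤ 2⁻¹ * ‖y‖ := by
    intro y
    obtain ⟨z, hz, hznorm⟩ := hC y
    have hvnorm : ‖P 0 z‖ ≤ C' * ‖y‖ := by
      calc ‖P 0 z‖ ≤ ‖P 0‖ * ‖z‖ := (P 0).le_opNorm z
        _ ≤ ‖P 0‖ * (C * ‖y‖) := by
            apply mul_le_mul_of_nonneg_left hznorm (norm_nonneg _)
        _ ≤ C' * ‖y‖ := by
            rw [hC'def]
            have := mul_le_mul_of_nonneg_right
              (le_add_of_nonneg_right (zero_le_one (α := ℝ)) : ‖P 0‖ ≤ ‖P 0‖ + 1)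
              (by positivity : (0:ℝ) ≤ C * ‖y‖)
            calc ‖P 0‖ * (C * ‖y‖) ≤ (‖P 0‖ + 1) * (C * ‖y‖) := this
              _ = (‖P 0‖ + 1) * C * ‖y‖ := by ring
    have hQ0v : Q 0 (P 0 z) = y := by
      rw [hQapp, ← ContinuousLinearMap.comp_apply (P 0) (P 0), hP0, ← hQapp]
      exact hz
    refine ⟨P t (P 0 z), hfixt _, ?_, ?_⟩
    · calc ‖P t (P 0 z)‖ ≤ ‖P t‖ * ‖P 0 z‖ := (P t).le_opNorm _
        _ ≤ (‖P 0‖ + 1) * (C' * ‖y‖) := by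
            apply mul_le_mul hPtnorm hvnorm (norm_nonneg _) (by positivity)
        _ = C₂ * ‖y‖ := by rw [hC₂def]; ring
    · calc ‖y - D t (P t (P 0 z))‖ = ‖(Q 0 - Q t) (P 0 z)‖ := by
            rw [← hQapp, ← hQ0v, ← ContinuousLinearMap.sub_apply]
        _ ≤ ‖Q 0 - Q t‖ * ‖P 0 z‖ := (Q 0 - Q t).le_opNorm _
        _ ≤ ε * (C' * ‖y‖) := by
            apply mul_le_mul _ hvnorm (norm_nonneg _) hεpos.le
            rw [norm_sub_rev]; exact h1.le
        _ ≤ 2⁻¹ * ‖y‖ := by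
            have hεC' : ε * C' ≤ 2⁻¹ := by linarith
            calc ε * (C' * ‖y‖) = (ε * C') * ‖y‖ := by ring
              _ ≤ 2⁻¹ * ‖y‖ := mul_le_mul_of_nonneg_right hεC' (norm_nonneg _)
  -- exact right inverse with uniform bound
  have hexact := approx_surj_aux (D t) (P t) C₂ hC₂pos.le happrox
  -- transport kernel vector
  have hq0x : Q 0 x = 0 := by rw [hQapp, hP0x]; exact hDx
  have hDtu : ‖D t (P t x)‖ ≤ ε * ‖x‖ := by
    calc ‖D t (P t x)‖ = ‖(Q t - Q 0) x‖ := by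
          rw [ContinuousLinearMap.sub_apply, hq0x, sub_zero, hQapp]
      _ ≤ ‖Q t - Q 0‖ * ‖x‖ := (Q t - Q 0).le_opNorm x
      _ ≤ ε * ‖x‖ := mul_le_mul_of_nonneg_right h1.le (norm_nonneg _)
  obtain ⟨z, hzfix, hznorm, hTz⟩ := hexact (D t (P t x))
  have hker : D t (P t x - z) = 0 := by rw [map_sub, hTz, sub_self]
  have hmemt : P t x - z ∈ LinearMap.range (P t : H →ₗ[ℝ] H) :=
    ⟨P t x - z, by rw [map_sub]; simp only [ContinuousLinearMap.coe_coe]; rw [hzfix, hfixt]⟩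
  have huz : P t x - z = 0 := (hiso t ht).1 _ hmemt hker
  have hueqz : P t x = z := by rwa [sub_eq_zero] at huz
  -- norm estimates
  have hulow : ‖x‖ / 2 ≤ ‖P t x‖ := by
    have h3 : ‖P t x - x‖ ≤ 2⁻¹ * ‖x‖ := by
      calc ‖P t x - x‖ = ‖(P t - P 0) x‖ := by
            rw [ContinuousLinearMap.sub_apply, hP0x]
        _ ≤ ‖P t - P 0‖ * ‖x‖ := (P t - P 0).le_opNorm x
        _ ≤ 2⁻¹ * ‖x‖ := mul_le_mul_of_nonneg_right h2.le (norm_nonneg _)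
    have h4 := abs_le.mp (abs_norm_sub_norm_le (P t x) x)
    linarith [h4.1]
  have huhigh : ‖P t x‖ ≤ ‖x‖ / 4 := by
    have hεC₂ : 2 * C₂ * ε ≤ 4⁻¹ := by nlinarith [hεpos.le, hC₂pos.le]
    calc ‖P t x‖ = ‖z‖ := by rw [hueqz]
      _ ≤ 2 * C₂ * ‖D t (P t x)‖ := hznorm
      _ ≤ 2 * C₂ * (ε * ‖x‖) := by
          apply mul_le_mul_of_nonneg_left hDtu (by positivity)
      _ = (2 * C₂ * ε) * ‖x‖ := by ring
      _ ≤ 4⁻¹ * ‖x‖ := mul_le_mul_of_nonneg_right hεC₂ (norm_nonneg _)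
      _ ≤ ‖x‖ / 4 := by linarith
  linarith
end

section
/- Let H be a Hilbert space, V a finite-dimensional vector space, and L ⊆ H ⊕ V a closed linear subspace. Then the image of L under the orthogonal projection P : H ⊕ V → H is a closed subspace of H. -/
theorem aux_sup_closed {E : Type*} [NormedAddCommGroup E] [NormedSpace ℝ E]
    (M F : Submodule ℝ E) (hM : IsClosed (M : Set E)) (hF : FiniteDimensional ℝ F) :
    IsClosed ((M ⊔ F : Submodule ℝ E) : Set E) := by
  haveI := hM
  haveI := hF
  let π : E →L[ℝ] (E ⧸ M) :=
    LinearMap.mkContinuous M.mkQ 1 (fun m => by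
      simpa using Submodule.Quotient.norm_mk_le M m)
  haveI : FiniteDimensional ℝ (F.map M.mkQ) := Module.Finite.map F M.mkQ
  have hclosed : IsClosed ((F.map M.mkQ : Submodule ℝ (E ⧸ M)) : Set (E ⧸ M)) :=
    Submodule.closed_of_finiteDimensional _
  have key : (M ⊔ F : Submodule ℝ E) = (F.map M.mkQ).comap M.mkQ := by
    rw [Submodule.comap_map_eq, Submodule.ker_mkQ, sup_comm]
  rw [key]
  exact hclosed.preimage π.continuous

/-- If `H` is a Hilbert space, `V` a finite-dimensional inner product space and
`L ⊆ H × V` a closed linear subspace, then the image of `L` under the orthogonal projection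
onto the first factor is a closed subspace of `H`. -/
theorem stmt1
    {H V : Type*} [NormedAddCommGroup H] [InnerProductSpace ℝ H] [CompleteSpace H]
    [NormedAddCommGroup V] [InnerProductSpace ℝ V] [FiniteDimensional ℝ V]
    (L : Submodule ℝ (H × V)) (hL : IsClosed (L : Set (H × V))) :
    IsClosed ((L.map (ContinuousLinearMap.fst ℝ H V : H × V →ₗ[ℝ] H) : Submodule ℝ H) : Set H) := by
  classical
  set F : Submodule ℝ (H × V) := (⊤ : Submodule ℝ V).map (LinearMap.inr ℝ H V) with hF
  haveI : FiniteDimensional ℝ F := Module.Finite.map _ _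
  have hS : IsClosed ((L ⊔ F : Submodule ℝ (H × V)) : Set (H × V)) :=
    aux_sup_closed L F hL inferInstance
  have hset : ((L.map (ContinuousLinearMap.fst ℝ H V : H × V →ₗ[ℝ] H) : Submodule ℝ H) : Set H)
      = (fun h : H => (h, (0 : V))) ⁻¹' ((L ⊔ F : Submodule ℝ (H × V)) : Set (H × V)) := by
    ext h
    simp only [Set.mem_preimage, SetLike.mem_coe, Submodule.mem_map]
    constructor
    · rintro ⟨⟨a, b⟩, hab, rfl⟩
      have hmemF : ((0 : H), -b) ∈ F := ⟨-b, trivial, rfl⟩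
      have : ((a, b) : H × V) + (0, -b) ∈ L ⊔ F := Submodule.add_mem_sup hab hmemF
      simpa using this
    · intro hmem
      rcases Submodule.mem_sup.mp hmem with ⟨x, hx, y, hy, hxy⟩
      rcases hy with ⟨v, -, rfl⟩
      refine ⟨x, hx, ?_⟩
      have h1 := congrArg Prod.fst hxy
      simpa using h1
  rw [hset]
  exact hS.preimage (by fun_prop)
end
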